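/- arXiv:1402.7157 — 5 statements merged into one kernel-verified Lean document; each statement's English description precedes it below -/
import Mathlib

section
/- Let D ⊆ ℝⁿ (n ≥ 2) be open, let w : D → ℝ be C² with Δw = 0 and ∇w(x) ≠ 0 for all x ∈ D, let f : ℝ → ℝ be C² with f'(t) > 0 for all t, and let F : [0,∞) → ℝ be C² with F'(t) > 0 and F''(t) > 0 for t > 0; set H(t) = F'(t)/t for t > 0. Then at every point of D one has the identity div(H(|∇(f∘w)|) ∇(f∘w)) = H(f'(w)|∇w|) f''(w) |∇w|² + (H'(f'(w)|∇w|)/(f'(w)|∇w|)) · [ (f'(w))³ Δ_∞ w + (f'(w))² f''(w) |∇w|⁴ ]. -/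
open Set Filter MeasureTheory
open scoped RealInnerProductSpace Topology
noncomputable section

/-- The Laplacian of a scalar function on `ℝⁿ`, as sum of pure second derivatives. -/
def laplacian {n : ℕ} (u : EuclideanSpace ℝ (Fin n) → ℝ) (x : EuclideanSpace ℝ (Fin n)) : ℝ :=
  ∑ i, fderiv ℝ (fun y => fderiv ℝ u y (EuclideanSpace.single i 1)) x (EuclideanSpace.single i 1)

/-- The divergence of a vector field on `ℝⁿ`. -/
def divergence {n : ℕ} (X : EuclideanSpace ℝ (Fin n) → EuclideanSpace ℝ (Fin n))
    (x : EuclideanSpace ℝ (Fin n)) : ℝ :=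
  ∑ i, fderiv ℝ X x (EuclideanSpace.single i 1) i

/-- The `∞`-Laplacian `Δ_∞ u = ⟨∇u, (D²u) ∇u⟩`. -/
def inftyLaplacian {n : ℕ} (u : EuclideanSpace ℝ (Fin n) → ℝ)
    (x : EuclideanSpace ℝ (Fin n)) : ℝ :=
  ⟪gradient u x, fderiv ℝ (gradient u) x (gradient u x)⟫

/-- `H(t) = F'(t)/t`. -/
def Hfun (F : ℝ → ℝ) : ℝ → ℝ := fun t => deriv F t / t

/-- For a harmonic function `w` with non-vanishing gradient in an open set
`D ⊆ ℝⁿ` (`n ≥ 2`), a `C²` function `f` with `f' > 0`, and `F` of class `C²` on `[0,∞)` with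
`F' > 0`, `F'' > 0` on `(0,∞)`, setting `H(t) = F'(t)/t`, at every point of `D` one has
`div(H(|∇(f∘w)|)∇(f∘w)) = H(f'(w)|∇w|) f''(w) |∇w|²
  + (H'(f'(w)|∇w|)/(f'(w)|∇w|)) [ (f'(w))³ Δ_∞ w + (f'(w))² f''(w) |∇w|⁴ ]`. -/
theorem statement0 {n : ℕ} (hn : 2 ≤ n)
    (D : Set (EuclideanSpace ℝ (Fin n))) (hD : IsOpen D)
    (w : EuclideanSpace ℝ (Fin n) → ℝ) (hw : ContDiffOn ℝ 2 w D)
    (hharm : ∀ x ∈ D, laplacian w x = 0)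
    (hgrad : ∀ x ∈ D, gradient w x ≠ 0)
    (f : ℝ → ℝ) (hf : ContDiff ℝ 2 f) (hf' : ∀ t : ℝ, 0 < deriv f t)
    (F : ℝ → ℝ) (hF : ContDiffOn ℝ 2 F (Ici 0))
    (hF' : ∀ t > (0:ℝ), 0 < deriv F t) (hF'' : ∀ t > (0:ℝ), 0 < deriv (deriv F) t) :
    ∀ x ∈ D,
      divergence (fun y => Hfun F ‖gradient (f ∘ w) y‖ • gradient (f ∘ w) y) x =
        Hfun F (deriv f (w x) * ‖gradient w x‖) * deriv (deriv f) (w x) * ‖gradient w x‖ ^ 2 +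
          deriv (Hfun F) (deriv f (w x) * ‖gradient w x‖) / (deriv f (w x) * ‖gradient w x‖) *
            ((deriv f (w x)) ^ 3 * inftyLaplacian w x +
              (deriv f (w x)) ^ 2 * deriv (deriv f) (w x) * ‖gradient w x‖ ^ 4) := by
  intro x hx
  have hxD : D ∈ 𝓝 x := hD.mem_nhds hx
  -- basic differentiability facts
  have hfd : Differentiable ℝ f := hf.differentiable (by norm_num)
  have hf1 : ContDiff ℝ 1 (deriv f) := by
    have h : ContDiff ℝ (1+1 : ℕ) f := by norm_num [hf]
    exact (contDiff_succ_iff_deriv.mp h).2.2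
  have hwdiff : ∀ y ∈ D, DifferentiableAt ℝ w y := fun y hy =>
    (hw.contDiffAt (hD.mem_nhds hy)).differentiableAt (by norm_num)
  -- gradient of composite
  have hgradcomp : ∀ y ∈ D, gradient (f ∘ w) y = deriv f (w y) • gradient w y := by
    intro y hy
    have h1 : HasFDerivAt (f ∘ w) (deriv f (w y) • fderiv ℝ w y) y :=
      (hfd (w y)).hasDerivAt.comp_hasFDerivAt y (hwdiff y hy).hasFDerivAt
    show (InnerProductSpace.toDual ℝ _).symm (fderiv ℝ (f ∘ w) y) = _
    rw [h1.fderiv, _root_.map_smul]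
    rfl
  have hnormcomp : ∀ y ∈ D, ‖gradient (f ∘ w) y‖ = deriv f (w y) * ‖gradient w y‖ := by
    intro y hy
    rw [hgradcomp y hy, norm_smul, Real.norm_eq_abs, abs_of_pos (hf' _)]
  -- notation
  set v := gradient w x with hv
  set a := deriv f (w x) with hadef
  set b := ‖v‖ with hbdef
  set ψ := deriv (deriv f) (w x) with hψdef
  have ha : 0 < a := hf' _
  have hb : 0 < b := norm_pos_iff.mpr (hgrad x hx)
  have hab : 0 < a * b := mul_pos ha hb
  -- G := gradient w is C¹ on D
  have hfd1 : ContDiffOn ℝ 1 (fderiv ℝ w) D := hw.fderiv_of_isOpen hD (by norm_num)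
  have hGc1 : ContDiffOn ℝ 1 (gradient w) D :=
    ((InnerProductSpace.toDual ℝ (EuclideanSpace ℝ (Fin n))).symm.contDiff).comp_contDiffOn hfd1
  set L := fderiv ℝ (gradient w) x with hLdef
  have hGd : HasFDerivAt (gradient w) L x :=
    ((hGc1.contDiffAt hxD).differentiableAt (by norm_num)).hasFDerivAt
  set Lw := fderiv ℝ w x with hLwdef
  have hLw : HasFDerivAt w Lw x := (hwdiff x hx).hasFDerivAt
  have hLwv : ∀ h, Lw h = ⟪v, h⟫ := fun h => (InnerProductSpace.toDual_symm_apply).symm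
  -- derivative of y ↦ ‖gradient w y‖
  have hnormG : HasFDerivAt (fun y => ‖gradient w y‖) (b⁻¹ • ((innerSL ℝ v).comp L)) x := by
    have hinner : HasFDerivAt (fun y => ⟪gradient w y, gradient w y⟫)
        ((fderivInnerCLM ℝ (v, v)).comp (L.prod L)) x := hGd.inner ℝ hGd
    have hsq : HasDerivAt Real.sqrt (1/(2*Real.sqrt (⟪v, v⟫))) (⟪v, v⟫) :=
      Real.hasDerivAt_sqrt (by rw [real_inner_self_eq_norm_sq]; positivity)
    have hcomp := hsq.comp_hasFDerivAt x hinner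
    have heq : (fun y => ‖gradient w y‖) =
        (Real.sqrt ∘ fun y => ⟪gradient w y, gradient w y⟫) := by
      funext y
      simp only [Function.comp_apply]
      rw [real_inner_self_eq_norm_sq, Real.sqrt_sq (norm_nonneg _)]
    rw [heq]
    refine hcomp.congr_fderiv ?_
    ext h
    simp only [ContinuousLinearMap.smul_apply, ContinuousLinearMap.comp_apply,
      ContinuousLinearMap.prod_apply, fderivInnerCLM_apply, innerSL_apply_apply]
    rw [real_inner_self_eq_norm_sq, Real.sqrt_sq (norm_nonneg _), real_inner_comm (L h) v]
    field_simp
    ring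
  -- derivative of y ↦ deriv f (w y)
  have hφw : HasFDerivAt (fun y => deriv f (w y)) (ψ • Lw) x :=
    ((hf1.differentiable (by norm_num)) (w x)).hasDerivAt.comp_hasFDerivAt x hLw
  -- derivative of the product
  set N := b⁻¹ • ((innerSL ℝ v).comp L) with hNdef
  have hmul : HasFDerivAt (fun y => deriv f (w y) * ‖gradient w y‖)
      (a • N + b • (ψ • Lw)) x := hφw.mul hnormG
  -- Hfun F differentiable at a*b
  set h' := deriv (Hfun F) (a * b) with hh'def
  have hH : HasDerivAt (Hfun F) h' (a * b) := by
    have hF2' : ContDiffOn ℝ 1 (deriv F) (Ioi 0) :=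
      (hF.mono Ioi_subset_Ici_self).deriv_of_isOpen isOpen_Ioi (by norm_num)
    have hdF : DifferentiableAt ℝ (deriv F) (a*b) :=
      (hF2'.contDiffAt (isOpen_Ioi.mem_nhds hab)).differentiableAt (by norm_num)
    exact (hdF.div differentiableAt_id (ne_of_gt hab)).hasDerivAt
  set M := a • N + b • (ψ • Lw) with hMdef
  have hc : HasFDerivAt (fun y => Hfun F (deriv f (w y) * ‖gradient w y‖)) (h' • M) x :=
    by have := hH.comp_hasFDerivAt x hmul; exact this
  -- derivative of the vector field
  have hV : HasFDerivAt (fun y => deriv f (w y) • gradient w y)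
      (a • L + (ψ • Lw).smulRight v) x := hφw.smul hGd
  have hY : HasFDerivAt
      (fun y => Hfun F (deriv f (w y) * ‖gradient w y‖) • (deriv f (w y) • gradient w y))
      (Hfun F (a*b) • (a • L + (ψ • Lw).smulRight v) + (h' • M).smulRight (a • v)) x :=
    hc.smul hV
  have hXY : (fun y => Hfun F ‖gradient (f ∘ w) y‖ • gradient (f ∘ w) y) =ᶠ[𝓝 x]
      (fun y => Hfun F (deriv f (w y) * ‖gradient w y‖) • (deriv f (w y) • gradient w y)) :=
    eventually_of_mem hxD (fun y hy => by
      simp only [hgradcomp y hy, norm_smul, Real.norm_eq_abs, abs_of_pos (hf' (w y))])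
  have hX : HasFDerivAt (fun y => Hfun F ‖gradient (f ∘ w) y‖ • gradient (f ∘ w) y)
      (Hfun F (a*b) • (a • L + (ψ • Lw).smulRight v) + (h' • M).smulRight (a • v)) x :=
    hY.congr_of_eventuallyEq hXY
  -- key sums
  have hS1 : ∑ i, (L (EuclideanSpace.single i 1)) i = 0 := by
    rw [← hharm x hx]
    unfold laplacian
    apply Finset.sum_congr rfl
    intro i _
    have hfun : (fun y => fderiv ℝ w y (EuclideanSpace.single i 1)) =
        fun y => ⟪(EuclideanSpace.single i 1 : EuclideanSpace ℝ (Fin n)), gradient w y⟫ := by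
      funext y
      rw [real_inner_comm]
      exact (InnerProductSpace.toDual_symm_apply).symm
    have hd : HasFDerivAt
        (fun y => ⟪(EuclideanSpace.single i 1 : EuclideanSpace ℝ (Fin n)), gradient w y⟫)
        ((innerSL ℝ (EuclideanSpace.single i 1 : EuclideanSpace ℝ (Fin n))).comp L) x :=
      (innerSL ℝ (EuclideanSpace.single i 1 : EuclideanSpace ℝ (Fin n))).hasFDerivAt.comp x hGd
    rw [hfun, hd.fderiv]
    simp [EuclideanSpace.inner_single_left]
  have hS2 : ∑ i, v i * v i = b^2 := by
    rw [← real_inner_self_eq_norm_sq]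
    simp only [PiLp.inner_apply, RCLike.inner_apply, conj_trivial]
  have hS3 : ∑ i, ⟪v, L (EuclideanSpace.single i 1)⟫ * v i = inftyLaplacian w x := by
    have hdecomp : (∑ i, v i • (EuclideanSpace.single i 1 : EuclideanSpace ℝ (Fin n))) = v := by
      ext j
      rw [WithLp.ofLp_sum, Finset.sum_apply]
      simp [EuclideanSpace.single_apply]
    have h0 : inftyLaplacian w x = ⟪v, L v⟫ := rfl
    have h1 : L v = ∑ i, v i • L (EuclideanSpace.single i 1) := by
      conv_lhs => rw [← hdecomp]
      rw [map_sum]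
      exact Finset.sum_congr rfl fun i _ => by rw [ContinuousLinearMap.map_smul]
    rw [h0, h1, inner_sum]
    exact Finset.sum_congr rfl fun i _ => by rw [real_inner_smul_right]; ring
  -- compute divergence
  unfold divergence
  rw [hX.fderiv]
  have key : ∀ i, ((Hfun F (a*b) • (a • L + (ψ • Lw).smulRight v) +
      (h' • M).smulRight (a • v)) (EuclideanSpace.single i 1)) i =
      (Hfun F (a*b) * a) * (L (EuclideanSpace.single i 1)) i +
      (Hfun F (a*b) * ψ + h' * a * b * ψ) * (v i * v i) +
      (h' * a^2 * b⁻¹) * (⟪v, L (EuclideanSpace.single i 1)⟫ * v i) := by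
    intro i
    have h1 : Lw (EuclideanSpace.single i 1) = v i := by
      rw [hLwv]; simp [EuclideanSpace.inner_single_right]
    have h2 : N (EuclideanSpace.single i 1) = b⁻¹ * ⟪v, L (EuclideanSpace.single i 1)⟫ := by
      simp [hNdef]
    simp only [hMdef, ContinuousLinearMap.add_apply, ContinuousLinearMap.smul_apply,
      ContinuousLinearMap.smulRight_apply, PiLp.add_apply, PiLp.smul_apply, smul_eq_mul,
      h1, h2]
    ring
  rw [Finset.sum_congr rfl (fun i _ => key i)]
  rw [Finset.sum_add_distrib, Finset.sum_add_distrib, ← Finset.mul_sum, ← Finset.mul_sum,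
    ← Finset.mul_sum, hS1, hS2, hS3]
  field_simp
  ring
end
end

section
/- Let D ⊆ ℝⁿ (n ≥ 2) be open, let w : D → ℝ be C² with Δw = 0 and ∇w(x) ≠ 0 for all x ∈ D, let f : ℝ → ℝ be C² with f'(t) > 0 for all t, and let F : [0,∞) → ℝ be C² with F'(t) > 0 and F''(t) > 0 for t > 0; set H(t) = F'(t)/t. Then at every point x ∈ D, the inequality div(H(|∇(f∘w)|)∇(f∘w))(x) ≥ 0 holds if and only if f''(w(x)) ≥ ( F'(f'(w(x))|∇w(x)|)/F''(f'(w(x))|∇w(x)|) − f'(w(x))|∇w(x)| ) · |∇w(x)|^{-5} · Δ_∞ w(x). -/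
open Set Filter MeasureTheory
open scoped RealInnerProductSpace Topology
noncomputable section

lemma hasFDerivAt_norm_self {E : Type*} [NormedAddCommGroup E] [InnerProductSpace ℝ E] {x : E}
    (hx : x ≠ 0) :
    HasFDerivAt (fun y : E => ‖y‖) (‖x‖⁻¹ • innerSL ℝ x) x := by
  have h1 : HasFDerivAt (fun y : E => ‖y‖ ^ 2) (2 • innerSL ℝ x) x :=
    (hasStrictFDerivAt_norm_sq x).hasFDerivAt
  have h2 : HasDerivAt Real.sqrt (1 / (2 * Real.sqrt (‖x‖ ^ 2))) (‖x‖ ^ 2) :=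
    Real.hasDerivAt_sqrt (by simpa using pow_ne_zero 2 (norm_ne_zero_iff.mpr hx))
  have h3 := h2.comp_hasFDerivAt x h1
  have hfun : (fun y : E => ‖y‖) = Real.sqrt ∘ (fun y : E => ‖y‖ ^ 2) := by
    funext y; simp [Real.sqrt_sq (norm_nonneg y)]
  rw [hfun]
  refine h3.congr_fderiv ?_
  have hnx : ‖x‖ ≠ 0 := norm_ne_zero_iff.mpr hx
  ext v
  simp [Real.sqrt_sq (norm_nonneg x), smul_smul]
  field_simp

lemma algebra_key (a r P Q b Λ : ℝ) (ha : a ≠ 0) (hr : r ≠ 0) (hQ : Q ≠ 0) :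
    P / (a * r) * (b * r ^ 2) +
        (Q * (a * r) - P) / (a * r) ^ 2 * a * (a * (r⁻¹ * Λ) + r * (b * r ^ 2))
      = Q * r ^ 2 * (b - (P / Q - a * r) * (r ^ 5)⁻¹ * Λ) := by
  field_simp
  ring

lemma sum_single_mul {n : ℕ} (L : EuclideanSpace ℝ (Fin n) →L[ℝ] ℝ)
    (v : EuclideanSpace ℝ (Fin n)) :
    ∑ i, L (EuclideanSpace.single i 1) * v i = L v := by
  have hv : v = ∑ i, v i • EuclideanSpace.single i 1 := by
    ext j
    rw [WithLp.ofLp_sum, Finset.sum_apply]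
    simp [EuclideanSpace.single_apply]
  conv_rhs => rw [hv]
  rw [map_sum]
  refine Finset.sum_congr rfl fun i _ => ?_
  rw [_root_.map_smul]
  simp [mul_comm]

/-- Under the same hypotheses as in the computation of `Δ_H (f∘w)`:
at every point `x ∈ D`, one has `div(H(|∇(f∘w)|)∇(f∘w))(x) ≥ 0` if and only if
`f''(w(x)) ≥ (F'(f'(w)|∇w|)/F''(f'(w)|∇w|) − f'(w)|∇w|) |∇w|⁻⁵ Δ_∞ w` at `x`. -/
theorem statement1 {n : ℕ} (hn : 2 ≤ n)
    (D : Set (EuclideanSpace ℝ (Fin n))) (hD : IsOpen D)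
    (w : EuclideanSpace ℝ (Fin n) → ℝ) (hw : ContDiffOn ℝ 2 w D)
    (hharm : ∀ x ∈ D, laplacian w x = 0)
    (hgrad : ∀ x ∈ D, gradient w x ≠ 0)
    (f : ℝ → ℝ) (hf : ContDiff ℝ 2 f) (hf' : ∀ t : ℝ, 0 < deriv f t)
    (F : ℝ → ℝ) (hF : ContDiffOn ℝ 2 F (Ici 0))
    (hF' : ∀ t > (0:ℝ), 0 < deriv F t) (hF'' : ∀ t > (0:ℝ), 0 < deriv (deriv F) t) :
    ∀ x ∈ D,
      (0 ≤ divergence (fun y => Hfun F ‖gradient (f ∘ w) y‖ • gradient (f ∘ w) y) x ↔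
        (deriv F (deriv f (w x) * ‖gradient w x‖) /
            deriv (deriv F) (deriv f (w x) * ‖gradient w x‖) -
              deriv f (w x) * ‖gradient w x‖) *
            ‖gradient w x‖ ^ (-5 : ℤ) * inftyLaplacian w x ≤ deriv (deriv f) (w x)) := by
  intro x hx
  -- basic data
  set g : EuclideanSpace ℝ (Fin n) → EuclideanSpace ℝ (Fin n) := gradient w with hg_def
  set gx : EuclideanSpace ℝ (Fin n) := gradient w x with hgx_def
  set a : ℝ := deriv f (w x) with ha_def
  set b : ℝ := deriv (deriv f) (w x) with hb_def
  set r : ℝ := ‖gx‖ with hr_def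
  set t : ℝ := a * r with ht_def
  have hr0 : 0 < r := norm_pos_iff.mpr (hgrad x hx)
  have ha0 : 0 < a := hf' (w x)
  have ht0 : 0 < t := mul_pos ha0 hr0
  set P : ℝ := deriv F t with hP_def
  set Q : ℝ := deriv (deriv F) t with hQ_def
  have hQ0 : 0 < Q := hF'' t ht0
  set Λ : ℝ := inftyLaplacian w x with hΛ_def
  -- smoothness of w at x
  have hxD : D ∈ 𝓝 x := hD.mem_nhds hx
  have hwC2 : ContDiffAt ℝ 2 w x := hw.contDiffAt hxD
  have hwd : DifferentiableAt ℝ w x := hwC2.differentiableAt (by norm_num)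
  set w' : EuclideanSpace ℝ (Fin n) →L[ℝ] ℝ := fderiv ℝ w x with hw'_def
  have hw'x : HasFDerivAt w w' x := hwd.hasFDerivAt
  -- derivative of the gradient
  have hfd1 : DifferentiableAt ℝ (fderiv ℝ w) x :=
    (hwC2.fderiv_right (m := 1) (by norm_num)).differentiableAt one_ne_zero
  set eCLM : (EuclideanSpace ℝ (Fin n) →L[ℝ] ℝ) →L[ℝ] EuclideanSpace ℝ (Fin n) :=
    ((InnerProductSpace.toDual ℝ (EuclideanSpace ℝ (Fin n))).symm.toContinuousLinearEquiv :
      (EuclideanSpace ℝ (Fin n) →L[ℝ] ℝ) ≃L[ℝ] EuclideanSpace ℝ (Fin n)).toContinuousLinearMap with he_def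
  have hgrad_eq : g = fun y => eCLM (fderiv ℝ w y) := rfl
  have hA' : HasFDerivAt g (eCLM.comp (fderiv ℝ (fderiv ℝ w) x)) x := by
    rw [hgrad_eq]
    exact eCLM.hasFDerivAt.comp x hfd1.hasFDerivAt
  set A : EuclideanSpace ℝ (Fin n) →L[ℝ] EuclideanSpace ℝ (Fin n) := fderiv ℝ g x with hA_def
  have hAeq : A = eCLM.comp (fderiv ℝ (fderiv ℝ w) x) := by
    rw [hA_def]; exact hA'.fderiv
  have hA : HasFDerivAt g A x := by rw [hAeq]; exact hA'
  -- gradient/fderiv dictionary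
  have hgi : ∀ (u : EuclideanSpace ℝ (Fin n) → ℝ) (y v : EuclideanSpace ℝ (Fin n)),
      ⟪gradient u y, v⟫ = fderiv ℝ u y v := by
    intro u y v
    exact InnerProductSpace.toDual_symm_apply
  have hw'v : ∀ v, w' v = ⟪gx, v⟫ := fun v => (hgi w x v).symm
  -- infinity laplacian identity
  have hΛeq : Λ = ⟪gx, A gx⟫ := rfl
  -- norm of gradient
  have hgnorm : HasFDerivAt (fun y => ‖g y‖) ((‖gx‖⁻¹ • innerSL ℝ gx).comp A) x :=
    (hasFDerivAt_norm_self (hgrad x hx)).comp x hA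
  -- derivative of deriv f
  have hdf : ContDiff ℝ 1 (deriv f) := by
    have hf2 : ContDiff ℝ (1 + 1) f := by exact_mod_cast hf
    exact (contDiff_succ_iff_deriv.mp hf2).2.2
  have hfd : HasDerivAt (deriv f) b (w x) := ((hdf.differentiable one_ne_zero) (w x)).hasDerivAt
  have hfa : HasFDerivAt (fun y => deriv f (w y)) (b • w') x := hfd.comp_hasFDerivAt x hw'x
  set N : EuclideanSpace ℝ (Fin n) →L[ℝ] ℝ := (‖gx‖⁻¹ • innerSL ℝ gx).comp A with hN_def
  set T : EuclideanSpace ℝ (Fin n) →L[ℝ] ℝ := a • N + r • (b • w') with hT_def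
  have hτ : HasFDerivAt (fun y => deriv f (w y) * ‖g y‖) T x := hfa.mul hgnorm
  -- derivative of deriv F and Hfun at t
  have hFt : ContDiffAt ℝ 2 F t :=
    hF.contDiffAt (mem_of_superset (isOpen_Ioi.mem_nhds ht0) Ioi_subset_Ici_self)
  have hdF : ContDiffAt ℝ 1 (deriv F) t := by
    have h1 : ContDiffAt ℝ 1 (fderiv ℝ F) t := hFt.fderiv_right (by norm_num)
    have h2 := h1.clm_apply (contDiffAt_const (c := (1:ℝ)))
    have hfun2 : (fun y => fderiv ℝ F y 1) = deriv F := funext fun y => fderiv_apply_one_eq_deriv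
    rwa [hfun2] at h2
  have hQd : HasDerivAt (deriv F) Q t := (hdF.differentiableAt one_ne_zero).hasDerivAt
  set H' : ℝ := (Q * t - P) / t ^ 2 with hH'_def
  have hHd : HasDerivAt (Hfun F) H' t := by
    have h := hQd.div (hasDerivAt_id' t) (ne_of_gt ht0)
    exact HasDerivAt.congr_deriv (f := Hfun F) h (by simp [hH'_def, hP_def])
  have hc : HasFDerivAt (fun y => Hfun F (deriv f (w y) * ‖g y‖)) (H' • T) x :=
    hHd.comp_hasFDerivAt (f := fun y => deriv f (w y) * ‖g y‖) x hτ
  set M : EuclideanSpace ℝ (Fin n) →L[ℝ] EuclideanSpace ℝ (Fin n) :=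
    a • A + (b • w').smulRight gx with hM_def
  have hsm : HasFDerivAt (fun y => deriv f (w y) • g y) M x := hfa.smul hA
  set VD : EuclideanSpace ℝ (Fin n) →L[ℝ] EuclideanSpace ℝ (Fin n) :=
    Hfun F t • M + (H' • T).smulRight (a • gx) with hVD_def
  have hVt : HasFDerivAt
      (fun y => Hfun F (deriv f (w y) * ‖g y‖) • (deriv f (w y) • g y)) VD x := hc.smul hsm
  -- eventual equality of the vector field with the smooth model
  have hev : (fun y => Hfun F ‖gradient (f ∘ w) y‖ • gradient (f ∘ w) y) =ᶠ[𝓝 x]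
      (fun y => Hfun F (deriv f (w y) * ‖g y‖) • (deriv f (w y) • g y)) := by
    filter_upwards [hxD] with y hy
    have hwy : DifferentiableAt ℝ w y :=
      (hw.contDiffAt (hD.mem_nhds hy)).differentiableAt (by norm_num)
    have hfy : HasDerivAt f (deriv f (w y)) (w y) :=
      ((hf.differentiable (by norm_num)) (w y)).hasDerivAt
    have hcomp : HasFDerivAt (f ∘ w) (deriv f (w y) • fderiv ℝ w y) y :=
      hfy.comp_hasFDerivAt y hwy.hasFDerivAt
    have hgeq : gradient (f ∘ w) y = deriv f (w y) • g y := by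
      rw [gradient, hcomp.fderiv, _root_.map_smul]; rfl
    rw [hgeq, norm_smul, Real.norm_eq_abs, abs_of_pos (hf' (w y))]
  have hfderiv : fderiv ℝ (fun y => Hfun F ‖gradient (f ∘ w) y‖ • gradient (f ∘ w) y) x = VD :=
    hev.fderiv_eq.trans hVt.fderiv
  -- the three key sums
  have hS1 : ∑ i, A (EuclideanSpace.single i 1) i = 0 := by
    have hterm : ∀ i : Fin n, fderiv ℝ (fun y => fderiv ℝ w y (EuclideanSpace.single i 1)) x
        (EuclideanSpace.single i 1) = A (EuclideanSpace.single i 1) i := by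
      intro i
      have hfun2 : (fun y => fderiv ℝ w y (EuclideanSpace.single i 1)) =
          fun y => (innerSL ℝ (EuclideanSpace.single (𝕜 := ℝ) i 1)) (g y) := by
        funext y
        rw [innerSL_apply_apply, real_inner_comm]
        exact (hgi w y _).symm
      have hcomp : HasFDerivAt
          (fun y => (innerSL ℝ (EuclideanSpace.single (𝕜 := ℝ) i 1)) (g y))
          ((innerSL ℝ (EuclideanSpace.single (𝕜 := ℝ) i 1)).comp A) x :=
        ((innerSL ℝ (EuclideanSpace.single (𝕜 := ℝ) i 1)).hasFDerivAt).comp x hA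
      rw [hfun2, hcomp.fderiv]
      simp [EuclideanSpace.inner_single_left]
    have hh := hharm x hx
    rw [laplacian] at hh
    rw [← hh]
    exact Finset.sum_congr rfl fun i _ => (hterm i).symm
  have hS2 : ∑ i, w' (EuclideanSpace.single i 1) * gx i = r ^ 2 := by
    rw [sum_single_mul w' gx, hw'v gx, real_inner_self_eq_norm_sq]
  have hS3 : ∑ i, T (EuclideanSpace.single i 1) * gx i = a * (r⁻¹ * Λ) + r * (b * r ^ 2) := by
    rw [sum_single_mul T gx]
    have hNgx : N gx = r⁻¹ * Λ := by
      rw [hN_def]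
      simp [hΛeq, hr_def]
    have hw'gx : w' gx = r ^ 2 := by rw [hw'v gx, real_inner_self_eq_norm_sq]
    rw [hT_def]
    simp only [ContinuousLinearMap.add_apply, ContinuousLinearMap.smul_apply, smul_eq_mul]
    rw [hNgx, hw'gx]
  -- value of the divergence
  have hdivval : divergence (fun y => Hfun F ‖gradient (f ∘ w) y‖ • gradient (f ∘ w) y) x =
      Hfun F t * (b * r ^ 2) + (H' * a) * (a * (r⁻¹ * Λ) + r * (b * r ^ 2)) := by
    rw [divergence]
    have hterm : ∀ i : Fin n,
        fderiv ℝ (fun y => Hfun F ‖gradient (f ∘ w) y‖ • gradient (f ∘ w) y) x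
          (EuclideanSpace.single i 1) i =
        Hfun F t * (a * A (EuclideanSpace.single i 1) i
          + b * (w' (EuclideanSpace.single i 1) * gx i))
          + (H' * a) * (T (EuclideanSpace.single i 1) * gx i) := by
      intro i
      rw [hfderiv]
      simp only [hVD_def, hM_def, ContinuousLinearMap.add_apply,
        ContinuousLinearMap.smul_apply, ContinuousLinearMap.smulRight_apply,
        PiLp.add_apply, PiLp.smul_apply, smul_eq_mul]
      ring
    rw [Finset.sum_congr rfl fun i _ => hterm i]
    rw [Finset.sum_add_distrib, ← Finset.mul_sum, ← Finset.mul_sum, Finset.sum_add_distrib,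
      ← Finset.mul_sum, ← Finset.mul_sum, hS1, hS2, hS3]
    ring
  -- final algebra
  have hz : r ^ (-5 : ℤ) = (r ^ 5)⁻¹ := by
    rw [zpow_neg, show ((5 : ℤ)) = ((5 : ℕ) : ℤ) from rfl, zpow_natCast]
  have hkey : divergence (fun y => Hfun F ‖gradient (f ∘ w) y‖ • gradient (f ∘ w) y) x =
      Q * r ^ 2 * (b - (P / Q - t) * (r ^ 5)⁻¹ * Λ) := by
    rw [hdivval]
    have h1 : Hfun F t = P / t := rfl
    rw [h1, hH'_def, ht_def]
    exact algebra_key a r P Q b Λ (ne_of_gt ha0) (ne_of_gt hr0) (ne_of_gt hQ0)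
  have hpos : 0 < Q * r ^ 2 := by positivity
  rw [hz, hkey, mul_nonneg_iff_of_pos_left hpos, sub_nonneg]
end
end

section
/- Let D ⊆ ℝⁿ (n ≥ 2) be open, let w : D → ℝ be C² with Δw = 0, ∇w(x) ≠ 0 and Δ_∞ w(x) ≥ 0 for all x ∈ D, let f : ℝ → ℝ be C² with f'(t) > 0 and f''(t) ≥ 0 for all t, and let F : [0,∞) → ℝ be C² with F'(t) > 0 and F''(t) > 0 for t > 0; set H(t) = F'(t)/t and R(t) = F''(t)/F'(t). If at every point of D one has f''(w) · R(f'(w)|∇w|) ≥ |∇w|^{-5} · Δ_∞ w, then div(H(|∇(f∘w)|)∇(f∘w)) ≥ 0 everywhere in D, i.e. f∘w is a classical subsolution of the equation Δ_H u = 0. -/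
open Set Filter MeasureTheory
open scoped RealInnerProductSpace Topology
noncomputable section

/-- `R(t) = F''(t)/F'(t)`. -/
def Rfun (F : ℝ → ℝ) : ℝ → ℝ := fun t => deriv (deriv F) t / deriv F t

variable {n : ℕ}

lemma grad_inner (w : EuclideanSpace ℝ (Fin n) → ℝ) (y u : EuclideanSpace ℝ (Fin n)) :
    ⟪gradient w y, u⟫ = fderiv ℝ w y u := by
  rw [gradient, ← InnerProductSpace.toDual_apply_apply, LinearIsometryEquiv.apply_symm_apply]

lemma coord_eq_inner (v : EuclideanSpace ℝ (Fin n)) (i : Fin n) :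
    ⟪v, EuclideanSpace.single i (1:ℝ)⟫ = v i := by
  rw [EuclideanSpace.inner_single_right]; simp

lemma sum_coord_single (v : EuclideanSpace ℝ (Fin n)) :
    ∑ i, v i • EuclideanSpace.single i (1:ℝ) = v := by
  ext j
  rw [WithLp.ofLp_sum, Finset.sum_apply]
  simp [EuclideanSpace.single_apply]

lemma sum_coord_apply (T : EuclideanSpace ℝ (Fin n) →L[ℝ] ℝ) (v : EuclideanSpace ℝ (Fin n)) :
    ∑ i, T (EuclideanSpace.single i (1:ℝ)) * v i = T v := by
  conv_rhs => rw [← sum_coord_single v]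
  rw [map_sum]
  simp [mul_comm]

set_option maxHeartbeats 2000000 in
/-- If `w` is harmonic in `D` with `∇w ≠ 0` and `Δ_∞ w ≥ 0` in `D`,
`f` is `C²` with `f' > 0`, `f'' ≥ 0`, and `f''(w) R(f'(w)|∇w|) ≥ |∇w|⁻⁵ Δ_∞ w` in `D`,
then `f ∘ w` is a classical subsolution: `div(H(|∇(f∘w)|)∇(f∘w)) ≥ 0` everywhere in `D`. -/
theorem statement2 {n : ℕ} (hn : 2 ≤ n)
    (D : Set (EuclideanSpace ℝ (Fin n))) (hD : IsOpen D)
    (w : EuclideanSpace ℝ (Fin n) → ℝ) (hw : ContDiffOn ℝ 2 w D)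
    (hharm : ∀ x ∈ D, laplacian w x = 0)
    (hgrad : ∀ x ∈ D, gradient w x ≠ 0)
    (hinfty : ∀ x ∈ D, 0 ≤ inftyLaplacian w x)
    (f : ℝ → ℝ) (hf : ContDiff ℝ 2 f)
    (hf' : ∀ t : ℝ, 0 < deriv f t) (hf'' : ∀ t : ℝ, 0 ≤ deriv (deriv f) t)
    (F : ℝ → ℝ) (hF : ContDiffOn ℝ 2 F (Ici 0))
    (hF' : ∀ t > (0:ℝ), 0 < deriv F t) (hF'' : ∀ t > (0:ℝ), 0 < deriv (deriv F) t)
    (hkey : ∀ x ∈ D,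
      ‖gradient w x‖ ^ (-5 : ℤ) * inftyLaplacian w x ≤
        deriv (deriv f) (w x) * Rfun F (deriv f (w x) * ‖gradient w x‖)) :
    ∀ x ∈ D,
      0 ≤ divergence (fun y => Hfun F ‖gradient (f ∘ w) y‖ • gradient (f ∘ w) y) x := by
  intro x hx
  have hxD : D ∈ 𝓝 x := hD.mem_nhds hx
  have hw2 : ContDiffAt ℝ 2 w x := hw.contDiffAt hxD
  have hwD : ∀ y ∈ D, DifferentiableAt ℝ w y := fun y hy =>
    (hw.contDiffAt (hD.mem_nhds hy)).differentiableAt two_ne_zero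
  -- gradient of w is C¹ at x
  have hGc : ContDiffAt ℝ 1 (gradient w) x := by
    have h1 : ContDiffAt ℝ 1 (fderiv ℝ w) x := hw2.fderiv_right (by norm_num)
    exact ((InnerProductSpace.toDual ℝ
      (EuclideanSpace ℝ (Fin n))).symm.contDiff.contDiffAt).comp x h1
  have hG : DifferentiableAt ℝ (gradient w) x := hGc.differentiableAt one_ne_zero
  set Gx := gradient w x with hGx_def
  set G' := fderiv ℝ (gradient w) x with hG'def
  have hGxne : Gx ≠ 0 := hgrad x hx
  have hm : 0 < ‖Gx‖ := norm_pos_iff.mpr hGxne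
  set a := deriv f (w x) with ha_def
  set b := deriv (deriv f) (w x) with hb_def
  have ha : 0 < a := hf' _
  have hb : 0 ≤ b := hf'' _
  set s := a * ‖Gx‖ with hs_def
  have hs : 0 < s := mul_pos ha hm
  -- laplacian identity
  have hlap : ∑ i, (G' (EuclideanSpace.single i 1)) i = 0 := by
    have h0 := hharm x hx
    rw [laplacian] at h0
    rw [← h0]
    refine Finset.sum_congr rfl fun i _ => ?_
    have heq : (fun y => fderiv ℝ w y (EuclideanSpace.single i 1)) =
        fun y => (EuclideanSpace.proj (𝕜 := ℝ) i) (gradient w y) := by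
      funext y
      rw [← grad_inner, coord_eq_inner]
      simp
    rw [heq]
    have hc : HasFDerivAt (fun y => (EuclideanSpace.proj (𝕜 := ℝ) i) (gradient w y))
        ((EuclideanSpace.proj (𝕜 := ℝ) i).comp G') x :=
      (EuclideanSpace.proj (𝕜 := ℝ) i).hasFDerivAt.comp x hG.hasFDerivAt
    rw [hc.fderiv]
    simp
  -- derivative of f' and gradient of f∘w
  have hf1 : ContDiff ℝ 1 (deriv f) := by
    rw [show (2 : WithTop ℕ∞) = 1 + 1 by norm_num] at hf
    exact (contDiff_succ_iff_deriv.mp hf).2.2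
  have hdf : Differentiable ℝ f := hf.differentiable (by norm_num)
  have hgradv : ∀ y ∈ D, gradient (f ∘ w) y = deriv f (w y) • gradient w y := by
    intro y hy
    have hcomp : HasFDerivAt (f ∘ w) (deriv f (w y) • fderiv ℝ w y) y :=
      (hdf (w y)).hasDerivAt.comp_hasFDerivAt y (hwD y hy).hasFDerivAt
    show (InnerProductSpace.toDual ℝ _).symm (fderiv ℝ (f ∘ w) y) = _
    rw [hcomp.fderiv, _root_.map_smul]
    rfl
  have hev : (gradient (f ∘ w)) =ᶠ[𝓝 x] fun y => deriv f (w y) • gradient w y :=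
    Filter.eventuallyEq_of_mem hxD fun y hy => hgradv y hy
  -- derivative of the scalar factor deriv f ∘ w
  have hφ : HasFDerivAt (fun y => deriv f (w y)) (b • fderiv ℝ w x) x := by
    have h1 : HasDerivAt (deriv f) b (w x) := ((hf1.differentiable one_ne_zero) (w x)).hasDerivAt
    exact h1.comp_hasFDerivAt x (hwD x hx).hasFDerivAt
  -- derivative of g = gradient (f∘w)
  set Lg : EuclideanSpace ℝ (Fin n) →L[ℝ] EuclideanSpace ℝ (Fin n) :=
    a • G' + (b • fderiv ℝ w x).smulRight Gx with hLg_def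
  have hgv : HasFDerivAt (gradient (f ∘ w)) Lg x := by
    have h1 := hφ.smul hG.hasFDerivAt
    exact h1.congr_of_eventuallyEq hev
  have hgx : gradient (f ∘ w) x = a • Gx := hgradv x hx
  have hnormgx : ‖gradient (f ∘ w) x‖ = s := by
    rw [hgx, norm_smul, Real.norm_of_nonneg ha.le]
  -- derivative of the norm of the gradient
  set gvx := gradient (f ∘ w) x with hgvx_def
  set t0 : ℝ := ⟪gvx, gvx⟫ with ht0_def
  have ht0 : t0 = s ^ 2 := by
    rw [ht0_def, real_inner_self_eq_norm_sq, hnormgx]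
  have ht0pos : (0:ℝ) < t0 := by rw [ht0]; positivity
  have hsqrt_t0 : Real.sqrt t0 = s := by
    rw [ht0, Real.sqrt_sq hs.le]
  set N'' : EuclideanSpace ℝ (Fin n) →L[ℝ] ℝ :=
    (1 / (2 * Real.sqrt t0)) • ((fderivInnerCLM ℝ (gvx, gvx)).comp (Lg.prod Lg)) with hN''_def
  have hN : HasFDerivAt (fun y => ‖gradient (f ∘ w) y‖) N'' x := by
    have hInner : HasFDerivAt (fun y => ⟪gradient (f ∘ w) y, gradient (f ∘ w) y⟫)
        ((fderivInnerCLM ℝ (gvx, gvx)).comp (Lg.prod Lg)) x := HasFDerivAt.inner ℝ hgv hgv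
    have hsq : HasDerivAt Real.sqrt (1 / (2 * Real.sqrt t0)) t0 :=
      Real.hasDerivAt_sqrt ht0pos.ne'
    have hcomp := hsq.comp_hasFDerivAt x hInner
    refine hcomp.congr_of_eventuallyEq (Filter.Eventually.of_forall fun y => ?_)
    show ‖gradient (f ∘ w) y‖ = Real.sqrt ⟪gradient (f ∘ w) y, gradient (f ∘ w) y⟫
    rw [real_inner_self_eq_norm_mul_norm, Real.sqrt_mul_self (norm_nonneg _)]
  -- derivative of Hfun F at s
  have hF2 : ContDiffAt ℝ 2 F s := hF.contDiffAt (Ici_mem_nhds hs)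
  have hdF1 : ContDiffAt ℝ 1 (deriv F) s := by
    have h1 : ContDiffAt ℝ 1 (fderiv ℝ F) s := hF2.fderiv_right (by norm_num)
    have h2 : ContDiffAt ℝ 1 (fun t => fderiv ℝ F t 1) s :=
      ((ContinuousLinearMap.apply ℝ ℝ (1:ℝ)).contDiff.contDiffAt).comp s h1
    exact h2.congr_of_eventuallyEq
      (Filter.Eventually.of_forall fun t => (fderiv_apply_one_eq_deriv).symm)
  set P := deriv F s with hP_def
  set Q := deriv (deriv F) s with hQ_def
  have hP : 0 < P := hF' s hs
  have hQ : 0 < Q := hF'' s hs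
  have hQder : HasDerivAt (deriv F) Q s := (hdF1.differentiableAt one_ne_zero).hasDerivAt
  have hHder : HasDerivAt (Hfun F) ((Q * s - P * 1) / s ^ 2) s :=
    hQder.div (hasDerivAt_id s) hs.ne'
  set c : ℝ := (Q * s - P * 1) / s ^ 2 with hc_def
  -- derivative of the full vector field
  have hHN : HasFDerivAt (fun y => Hfun F ‖gradient (f ∘ w) y‖) (c • N'') x :=
    hHder.comp_hasFDerivAt_of_eq x hN hnormgx.symm
  have hX : HasFDerivAt (fun y => Hfun F ‖gradient (f ∘ w) y‖ • gradient (f ∘ w) y)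
      (Hfun F ‖gradient (f ∘ w) x‖ • Lg + (c • N'').smulRight gvx) x := hHN.smul hgv
  -- compute the divergence
  rw [divergence, hX.fderiv]
  have hsplit : ∀ i : Fin n,
      ((Hfun F ‖gvx‖ • Lg + (c • N'').smulRight gvx) (EuclideanSpace.single i 1)) i
        = Hfun F ‖gvx‖ * (Lg (EuclideanSpace.single i 1) i)
          + c * (N'' (EuclideanSpace.single i 1) * gvx i) := by
    intro i
    simp only [ContinuousLinearMap.add_apply, ContinuousLinearMap.smul_apply,
      ContinuousLinearMap.smulRight_apply, PiLp.add_apply, PiLp.smul_apply, smul_eq_mul]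
    ring
  rw [Finset.sum_congr rfl fun i _ => hsplit i, Finset.sum_add_distrib,
    ← Finset.mul_sum, ← Finset.mul_sum, sum_coord_apply N'' gvx]
  -- evaluate the pieces
  have hGxcoord : ∀ u : EuclideanSpace ℝ (Fin n), fderiv ℝ w x u = ⟪Gx, u⟫ := fun u =>
    (grad_inner w x u).symm
  have hSA : ∑ i, (Lg (EuclideanSpace.single i 1)) i = b * ‖Gx‖ ^ 2 := by
    have h1 : ∀ i : Fin n, (Lg (EuclideanSpace.single i 1)) i
        = a * (G' (EuclideanSpace.single i 1)) i + b * (Gx i * Gx i) := by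
      intro i
      rw [hLg_def]
      simp only [ContinuousLinearMap.add_apply, ContinuousLinearMap.smul_apply,
        ContinuousLinearMap.smulRight_apply, PiLp.add_apply, PiLp.smul_apply, smul_eq_mul]
      rw [hGxcoord, coord_eq_inner]
      ring
    rw [Finset.sum_congr rfl fun i _ => h1 i, Finset.sum_add_distrib,
      ← Finset.mul_sum, ← Finset.mul_sum, hlap, mul_zero, zero_add]
    have h2 : ∑ i, Gx i * Gx i = ‖Gx‖ ^ 2 := by
      rw [← real_inner_self_eq_norm_sq, PiLp.inner_apply]
      simp [sq]
    rw [h2]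
  have hLgGx : ⟪Gx, Lg Gx⟫ = a * inftyLaplacian w x + b * (‖Gx‖ ^ 2 * ‖Gx‖ ^ 2) := by
    rw [hLg_def]
    simp only [ContinuousLinearMap.add_apply, ContinuousLinearMap.smul_apply,
      ContinuousLinearMap.smulRight_apply, smul_eq_mul]
    rw [inner_add_right, real_inner_smul_right, real_inner_smul_right, hGxcoord,
      real_inner_self_eq_norm_sq]
    have : ⟪Gx, G' Gx⟫ = inftyLaplacian w x := rfl
    rw [this]
    ring
  have hN''gvx : N'' gvx = (1 / (2 * s)) * (2 * (a * a * ⟪Gx, Lg Gx⟫)) := by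
    rw [hN''_def]
    simp only [ContinuousLinearMap.smul_apply, ContinuousLinearMap.comp_apply,
      ContinuousLinearMap.prod_apply, fderivInnerCLM_apply, smul_eq_mul, hsqrt_t0]
    have hswap : ⟪Lg gvx, gvx⟫ = ⟪gvx, Lg gvx⟫ := real_inner_comm _ _
    have hval : ⟪gvx, Lg gvx⟫ = a * (a * ⟪Gx, Lg Gx⟫) := by
      rw [hgx, Lg.map_smul, real_inner_smul_left, real_inner_smul_right]
    rw [hswap, hval]
    ring
  have hHval : Hfun F ‖gvx‖ = P / s := by rw [hnormgx]; rfl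
  rw [hSA, hN''gvx, hHval, hLgGx]
  -- final arithmetic
  have hI : 0 ≤ inftyLaplacian w x := hinfty x hx
  have hk : ‖Gx‖ ^ (-5 : ℤ) * inftyLaplacian w x ≤ b * (Q / P) := hkey x hx
  have hm5 : (0:ℝ) < ‖Gx‖ ^ 5 := by positivity
  have hk' : (‖Gx‖ ^ 5)⁻¹ * inftyLaplacian w x ≤ b * Q / P := by
    have hz : (‖Gx‖ : ℝ) ^ (-5 : ℤ) = (‖Gx‖ ^ 5)⁻¹ := by
      rw [zpow_neg, show ((5:ℤ)) = ((5:ℕ):ℤ) by norm_num, zpow_natCast]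
    rw [hz] at hk
    calc (‖Gx‖ ^ 5)⁻¹ * inftyLaplacian w x ≤ b * (Q / P) := hk
    _ = b * Q / P := by ring
  have hPI : P * inftyLaplacian w x ≤ b * Q * ‖Gx‖ ^ 5 := by
    rw [inv_mul_eq_div, div_le_div_iff₀ hm5 hP] at hk'
    linarith
  rw [hc_def, hs_def]
  have hsa : (0:ℝ) < a * ‖Gx‖ := hs
  have hEq : P / (a * ‖Gx‖) * (b * ‖Gx‖ ^ 2) +
      (Q * (a * ‖Gx‖) - P * 1) / (a * ‖Gx‖) ^ 2 *
        (1 / (2 * (a * ‖Gx‖)) *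
          (2 * (a * a * (a * inftyLaplacian w x + b * (‖Gx‖ ^ 2 * ‖Gx‖ ^ 2))))) =
      (P * (a * ‖Gx‖) ^ 2 * (b * ‖Gx‖ ^ 2) +
        (Q * (a * ‖Gx‖) - P) *
          (a * a * (a * inftyLaplacian w x + b * (‖Gx‖ ^ 2 * ‖Gx‖ ^ 2)))) /
        (a ^ 3 * ‖Gx‖ ^ 3) := by
    field_simp
  rw [hEq]
  apply div_nonneg _ (by positivity)
  nlinarith [mul_nonneg (mul_nonneg (mul_nonneg hQ.le (pow_pos ha 4).le) hm.le) hI,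
    mul_nonneg (pow_pos ha 3).le (sub_nonneg.mpr hPI)]
end
end

section
/- Let F : [0,∞) → ℝ be C² with F(0) = F'(0) = 0, F'' > 0 on (0,∞), and suppose h := F' is a strictly increasing bijection of [0,∞) onto [0,∞) with inverse g. Let ζ : [0,1] → [0,∞) be integrable and let α, β, m > 0. Define φ : [0,1] → ℝ by φ(w) = β⁻¹ · g( h(βm) · exp( (β/α) ∫_0^w ζ(τ) dτ ) ). Then φ(0) = m, φ is positive and monotone nondecreasing, and for all 0 ≤ w₁ ≤ w₂ ≤ 1 one has α ∫_{φ(w₁)}^{φ(w₂)} R(βs) ds = ∫_{w₁}^{w₂} ζ(w) dw, where R(t) = F''(t)/F'(t). -/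
open Set Filter MeasureTheory
open scoped Topology
noncomputable section

/-- Let `F` be `C²` on `[0,∞)` with `F(0) = F'(0) = 0`, `F'' > 0` on `(0,∞)`,
and let `h := F'` be a strictly increasing bijection of `[0,∞)` onto itself with inverse `g`.
For integrable `ζ ≥ 0` on `[0,1]` and `α, β, m > 0`, the function
`φ(w) = β⁻¹ g( h(βm) exp( (β/α) ∫_0^w ζ ) )` satisfies `φ(0) = m`, `φ > 0`,
`φ` is monotone nondecreasing on `[0,1]`, and
`α ∫_{φ(w₁)}^{φ(w₂)} R(βs) ds = ∫_{w₁}^{w₂} ζ(w) dw` for all `0 ≤ w₁ ≤ w₂ ≤ 1`. -/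
theorem statement5 (F : ℝ → ℝ) (hF : ContDiffOn ℝ 2 F (Ici 0))
    (hF0 : F 0 = 0) (hF'0 : deriv F 0 = 0)
    (hF'' : ∀ t > (0:ℝ), 0 < deriv (deriv F) t)
    (hmono : StrictMonoOn (deriv F) (Ici 0))
    (g : ℝ → ℝ)
    (hg1 : ∀ t ∈ Ici (0:ℝ), g (deriv F t) = t)
    (hg2 : ∀ t ∈ Ici (0:ℝ), 0 ≤ g t ∧ deriv F (g t) = t)
    (ζ : ℝ → ℝ) (hζint : IntegrableOn ζ (Icc 0 1))
    (hζpos : ∀ w ∈ Icc (0:ℝ) 1, 0 ≤ ζ w)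
    (α β m : ℝ) (hα : 0 < α) (hβ : 0 < β) (hm : 0 < m)
    (φ : ℝ → ℝ)
    (hφ : ∀ w : ℝ, φ w =
      β⁻¹ * g (deriv F (β * m) * Real.exp (β / α * ∫ τ in (0:ℝ)..w, ζ τ))) :
    φ 0 = m ∧ (∀ w ∈ Icc (0:ℝ) 1, 0 < φ w) ∧ MonotoneOn φ (Icc 0 1) ∧
      ∀ w₁ w₂ : ℝ, 0 ≤ w₁ → w₁ ≤ w₂ → w₂ ≤ 1 →
        α * ∫ s in φ w₁..φ w₂, Rfun F (β * s) = ∫ w in w₁..w₂, ζ w := by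
  have hβm : (0:ℝ) < β * m := mul_pos hβ hm
  -- F' positive on (0,∞)
  have hpos : ∀ t : ℝ, 0 < t → 0 < deriv F t := by
    intro t ht
    have := hmono (self_mem_Ici) (le_of_lt ht) ht
    rwa [hF'0] at this
  have hc : 0 < deriv F (β * m) := hpos _ hβm
  set I : ℝ → ℝ := fun w => ∫ τ in (0:ℝ)..w, ζ τ with hI
  -- integrability on subintervals
  have hint : ∀ a b : ℝ, 0 ≤ a → b ≤ 1 → a ≤ b → IntervalIntegrable ζ volume a b := by
    intro a b ha hb hab
    apply (hζint.mono_set ?_).intervalIntegrable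
    rw [uIcc_of_le hab]
    exact Icc_subset_Icc ha hb
  have hInonneg : ∀ w : ℝ, 0 ≤ w → w ≤ 1 → 0 ≤ I w := by
    intro w h0 h1
    apply intervalIntegral.integral_nonneg h0
    intro u hu
    exact hζpos u ⟨hu.1, hu.2.trans h1⟩
  -- positivity of arguments to g
  have hargpos : ∀ w : ℝ, 0 < deriv F (β * m) * Real.exp (β / α * I w) := by
    intro w
    positivity
  -- key identity: deriv F (β * φ w) = c * exp (...)
  have hβφ : ∀ w : ℝ, β * φ w = g (deriv F (β * m) * Real.exp (β / α * I w)) := by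
    intro w
    rw [hφ w]
    field_simp
    rfl
  have hkey : ∀ w : ℝ, deriv F (β * φ w) = deriv F (β * m) * Real.exp (β / α * I w) := by
    intro w
    rw [hβφ w]
    exact (hg2 _ (le_of_lt (hargpos w))).2
  -- positivity of φ everywhere
  have hφpos : ∀ w : ℝ, 0 < φ w := by
    intro w
    have hg0 := (hg2 _ (le_of_lt (hargpos w))).1
    have hgne : g (deriv F (β * m) * Real.exp (β / α * I w)) ≠ 0 := by
      intro h
      have h2 := (hg2 _ (le_of_lt (hargpos w))).2
      rw [h, hF'0] at h2
      exact absurd h2.symm (ne_of_gt (hargpos w))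
    have hbφ : 0 < β * φ w := hβφ w ▸ lt_of_le_of_ne hg0 (Ne.symm hgne)
    nlinarith
  -- g is monotone on nonneg reals
  have hgmono : ∀ x y : ℝ, 0 ≤ x → x ≤ y → g x ≤ g y := by
    intro x y hx hxy
    by_contra hlt
    push_neg at hlt
    have h1 := (hg2 x hx).1
    have h2 := (hg2 y (hx.trans hxy)).1
    have := hmono h2 h1 hlt
    rw [(hg2 x hx).2, (hg2 y (hx.trans hxy)).2] at this
    exact absurd hxy (not_le.mpr this)
  -- φ(0) = m
  have hφ0 : φ 0 = m := by
    rw [hφ 0, intervalIntegral.integral_same, mul_zero, Real.exp_zero, mul_one,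
      hg1 _ (le_of_lt hβm)]
    field_simp
  refine ⟨hφ0, fun w _ => hφpos w, ?_, ?_⟩
  · -- monotonicity
    intro w₁ hw₁ w₂ hw₂ h12
    have hII : I w₁ ≤ I w₂ := by
      have hadd := intervalIntegral.integral_add_adjacent_intervals
        (hint 0 w₁ le_rfl hw₁.2 hw₁.1) (hint w₁ w₂ hw₁.1 hw₂.2 h12)
      have hnn : 0 ≤ ∫ τ in w₁..w₂, ζ τ := by
        apply intervalIntegral.integral_nonneg h12
        intro u hu
        exact hζpos u ⟨hw₁.1.trans hu.1, hu.2.trans hw₂.2⟩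
      have : I w₂ = I w₁ + ∫ τ in w₁..w₂, ζ τ := hadd.symm
      linarith
    rw [hφ w₁, hφ w₂]
    apply mul_le_mul_of_nonneg_left _ (le_of_lt (inv_pos.mpr hβ))
    apply hgmono _ _ (le_of_lt (hargpos w₁))
    apply mul_le_mul_of_nonneg_left _ (le_of_lt hc)
    apply Real.exp_le_exp.mpr
    apply mul_le_mul_of_nonneg_left hII (le_of_lt (div_pos hβ hα))
  · -- the integral identity
    intro w₁ w₂ h0 h12 h1
    have hφ12 : φ w₁ ≤ φ w₂ := by
      rw [hφ w₁, hφ w₂]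
      apply mul_le_mul_of_nonneg_left _ (le_of_lt (inv_pos.mpr hβ))
      apply hgmono _ _ (le_of_lt (hargpos w₁))
      apply mul_le_mul_of_nonneg_left _ (le_of_lt hc)
      apply Real.exp_le_exp.mpr
      apply mul_le_mul_of_nonneg_left _ (le_of_lt (div_pos hβ hα))
      have hadd := intervalIntegral.integral_add_adjacent_intervals
        (hint 0 w₁ le_rfl (h12.trans h1) h0) (hint w₁ w₂ h0 h1 h12)
      have hnn : 0 ≤ ∫ τ in w₁..w₂, ζ τ := by
        apply intervalIntegral.integral_nonneg h12
        intro u hu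
        exact hζpos u ⟨h0.trans hu.1, hu.2.trans h1⟩
      have : I w₂ = I w₁ + ∫ τ in w₁..w₂, ζ τ := hadd.symm
      linarith
    set a := φ w₁
    set b := φ w₂
    have ha : 0 < a := hφpos w₁
    -- C¹ regularity of deriv F on (0,∞)
    have hC1 : ContDiffOn ℝ 1 (deriv F) (Ioi 0) := by
      have := hF.mono (Ioi_subset_Ici (le_refl (0:ℝ)))
      exact this.deriv_of_isOpen isOpen_Ioi (by norm_num)
    have hC0 : ContinuousOn (deriv (deriv F)) (Ioi 0) := by
      exact (hC1.deriv_of_isOpen (m := 0) isOpen_Ioi (by norm_num)).continuousOn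
    -- derivative of log ∘ (deriv F) ∘ (β * ·)
    have hderiv : ∀ s ∈ uIcc a b, HasDerivAt (fun s => Real.log (deriv F (β * s)))
        (β * Rfun F (β * s)) s := by
      intro s hs
      rw [uIcc_of_le hφ12] at hs
      have hspos : 0 < s := lt_of_lt_of_le ha hs.1
      have hβs : 0 < β * s := mul_pos hβ hspos
      have hd : DifferentiableAt ℝ (deriv F) (β * s) := by
        have := hC1.contDiffAt (Ioi_mem_nhds hβs)
        exact this.differentiableAt one_ne_zero
      have hinner : HasDerivAt (fun s : ℝ => β * s) β s := by
        simpa using (hasDerivAt_id s).const_mul β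
      have houter : HasDerivAt (deriv F) (deriv (deriv F) (β * s)) (β * s) := hd.hasDerivAt
      have hcomp := houter.comp s hinner
      have hne : deriv F (β * s) ≠ 0 := ne_of_gt (hpos _ hβs)
      have := hcomp.log hne
      convert this using 1
      show β * (deriv (deriv F) (β * s) / deriv F (β * s)) = deriv (deriv F) (β * s) * β / deriv F (β * s)
      ring
      rfl
    -- integrability of the integrand
    have hcont : ContinuousOn (fun s => β * Rfun F (β * s)) (uIcc a b) := by
      have hsub : uIcc a b ⊆ Ioi 0 := by
        rw [uIcc_of_le hφ12]
        intro s hs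
        exact lt_of_lt_of_le ha hs.1
      have hβmap : ∀ s ∈ uIcc a b, β * s ∈ Ioi (0:ℝ) := fun s hs =>
        mul_pos hβ (hsub hs)
      have hcomp1 : ContinuousOn (fun s : ℝ => deriv (deriv F) (β * s)) (uIcc a b) :=
        hC0.comp ((continuous_const.mul continuous_id).continuousOn) hβmap
      have hcomp2 : ContinuousOn (fun s : ℝ => deriv F (β * s)) (uIcc a b) :=
        hC1.continuousOn.comp ((continuous_const.mul continuous_id).continuousOn) hβmap
      have : ContinuousOn (fun s : ℝ => Rfun F (β * s)) (uIcc a b) := by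
        apply hcomp1.div hcomp2
        intro s hs
        exact ne_of_gt (hpos _ (mul_pos hβ (hsub hs)))
      exact continuousOn_const.mul this
    have hintg : IntervalIntegrable (fun s => β * Rfun F (β * s)) volume a b :=
      hcont.intervalIntegrable
    have hFTC := intervalIntegral.integral_eq_sub_of_hasDerivAt hderiv hintg
    -- compute the difference of logs
    have hlog : ∀ w : ℝ, Real.log (deriv F (β * φ w)) =
        Real.log (deriv F (β * m)) + β / α * I w := by
      intro w
      rw [hkey w, Real.log_mul (ne_of_gt hc) (Real.exp_ne_zero _), Real.log_exp]
    have hdiff : Real.log (deriv F (β * b)) - Real.log (deriv F (β * a))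
        = β / α * (I w₂ - I w₁) := by
      show Real.log (deriv F (β * φ w₂)) - Real.log (deriv F (β * φ w₁)) = _
      rw [hlog w₂, hlog w₁]
      ring
    have hconst : ∫ s in a..b, β * Rfun F (β * s) = β * ∫ s in a..b, Rfun F (β * s) :=
      intervalIntegral.integral_const_mul β _
    have hIint : ∫ w in w₁..w₂, ζ w = I w₂ - I w₁ := by
      have hadd := intervalIntegral.integral_add_adjacent_intervals
        (hint 0 w₁ le_rfl (h12.trans h1) h0) (hint w₁ w₂ h0 h1 h12)
      have : I w₂ = I w₁ + ∫ τ in w₁..w₂, ζ τ := hadd.symm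
      linarith
    rw [hIint]
    have : β * ∫ s in a..b, Rfun F (β * s) = β / α * (I w₂ - I w₁) := by
      rw [← hconst, hFTC, hdiff]
    have hβne : β ≠ 0 := ne_of_gt hβ
    have hαne : α ≠ 0 := ne_of_gt hα
    field_simp at this ⊢
    nlinarith [this]
end
end

section
/- Let D ⊆ ℝⁿ be open, let F : [0,∞) → ℝ be convex and C¹ with F(0) = F'(0) = 0, set h = F' and H(t) = h(t)/t for t > 0 (with the flux field V(p) := H(|p|)p for p ≠ 0 and V(0) := 0). Let u, w : D → ℝ be locally Lipschitz with F(|∇u|), F(|∇w|), and |∇u| + |∇w| integrable on D, and suppose ∫_D F(|∇u|) dx ≤ ∫_D F(|∇(u + t(w−u))|) dx for every t ∈ [0,1]. Then ∫_D ⟨V(∇u), ∇(w − u)⟩ dx ≥ 0; equivalently, ∫_D H(|∇u|)⟨∇u, ∇(u − w)⟩ dx ≤ 0. -/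
open Set Filter MeasureTheory
open scoped RealInnerProductSpace Topology Classical
noncomputable section

/-- The flux field `V(p) = H(|p|)p = (F'(|p|)/|p|) p` for `p ≠ 0`, `V(0) = 0`. -/
def flux {n : ℕ} (F : ℝ → ℝ) (p : EuclideanSpace ℝ (Fin n)) : EuclideanSpace ℝ (Fin n) :=
  if p = 0 then 0 else (deriv F ‖p‖ / ‖p‖) • p

section Faux
variable {F : ℝ → ℝ}

lemma F_nonneg (hFconv : ConvexOn ℝ (Ici 0) F)
    (hFdiff : ∀ t ∈ Ici (0:ℝ), DifferentiableAt ℝ F t)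
    (hF0 : F 0 = 0) (hF'0 : deriv F 0 = 0) : ∀ t ∈ Ici (0:ℝ), 0 ≤ F t := by
  intro t ht
  rcases eq_or_lt_of_le (mem_Ici.1 ht) with h | h
  · simp [← h, hF0]
  have hd : HasDerivAt F 0 0 := by
    have := (hFdiff 0 (mem_Ici.2 le_rfl)).hasDerivAt
    rwa [hF'0] at this
  have hs : Tendsto (slope F 0) (𝓝[>] 0) (𝓝 0) :=
    (hasDerivAt_iff_tendsto_slope.1 hd).mono_left
      (nhdsWithin_mono _ fun x hx => ne_of_gt hx)
  have key : (0:ℝ) ≤ slope F 0 t := by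
    refine le_of_tendsto hs ?_
    filter_upwards [Ioo_mem_nhdsGT_of_mem (left_mem_Ico.2 h)] with s hs'
    have := hFconv.secant_mono (le_refl (0:ℝ)) (le_of_lt hs'.1) (le_of_lt h)
      (ne_of_gt hs'.1) (ne_of_gt h) hs'.2.le
    simpa [slope_def_field] using this
  rw [slope_def_field, hF0, sub_zero, sub_zero] at key
  rcases div_nonneg_iff.1 key with h' | h'
  · exact h'.1
  · linarith [h'.2, h]

lemma F_mono (hFconv : ConvexOn ℝ (Ici 0) F)
    (hFdiff : ∀ t ∈ Ici (0:ℝ), DifferentiableAt ℝ F t)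
    (hF0 : F 0 = 0) (hF'0 : deriv F 0 = 0) : MonotoneOn F (Ici 0) := by
  intro x hx y hy hxy
  rcases eq_or_lt_of_le hxy with rfl | hxy
  · exact le_rfl
  rcases eq_or_lt_of_le (mem_Ici.1 hx) with h0 | h0
  · rw [← h0, hF0]; exact F_nonneg hFconv hFdiff hF0 hF'0 y hy
  have h1 := hFconv.slope_mono_adjacent (self_mem_Ici (a := (0:ℝ))) hy h0 hxy
  have hFx : 0 ≤ F x := F_nonneg hFconv hFdiff hF0 hF'0 x hx
  have h2 : (0:ℝ) ≤ (F x - F 0) / (x - 0) := by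
    rw [hF0, sub_zero, sub_zero]; positivity
  have h3 : (0:ℝ) ≤ (F y - F x) / (y - x) := le_trans h2 h1
  rcases div_nonneg_iff.1 h3 with h' | h'
  · linarith [h'.1]
  · linarith [h'.2, hxy]

end Faux

section Paux
variable {n : ℕ} {F : ℝ → ℝ}

lemma phi_convex (hFconv : ConvexOn ℝ (Ici 0) F) (hFmono : MonotoneOn F (Ici 0))
    (a c : EuclideanSpace ℝ (Fin n)) :
    ConvexOn ℝ univ (fun t : ℝ => F ‖a + t • c‖) := by
  refine ⟨convex_univ, fun x _ y _ p q hp hq hpq => ?_⟩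
  have heq : a + (p • x + q • y) • c = p • (a + x • c) + q • (a + y • c) := by
    have : a = p • a + q • a := by rw [← add_smul, hpq, one_smul]
    rw [smul_add, smul_add, smul_smul, smul_smul]
    rw [add_smul]
    nth_rewrite 1 [this]
    abel
  have h1 : ‖a + (p • x + q • y) • c‖ ≤ p * ‖a + x • c‖ + q * ‖a + y • c‖ := by
    rw [heq]
    refine (norm_add_le _ _).trans ?_
    rw [norm_smul, norm_smul, Real.norm_eq_abs, Real.norm_eq_abs,
      abs_of_nonneg hp, abs_of_nonneg hq]
  calc F ‖a + (p • x + q • y) • c‖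
      ≤ F (p * ‖a + x • c‖ + q * ‖a + y • c‖) :=
        hFmono (mem_Ici.2 (norm_nonneg _)) (mem_Ici.2 (by positivity)) h1
    _ ≤ p • F ‖a + x • c‖ + q • F ‖a + y • c‖ :=
        hFconv.2 (norm_nonneg _) (norm_nonneg _) hp hq hpq

/-- Derivative of `t ↦ F ‖a + t • c‖` at `0` is `⟪flux F a, c⟫`, when `a ≠ 0`. -/
lemma hasDerivAt_phi (hFdiff : ∀ t ∈ Ici (0:ℝ), DifferentiableAt ℝ F t)
    {a : EuclideanSpace ℝ (Fin n)} (ha : a ≠ 0) (c : EuclideanSpace ℝ (Fin n)) :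
    HasDerivAt (fun t : ℝ => F ‖a + t • c‖) ⟪flux F a, c⟫ 0 := by
  have hna : (0:ℝ) < ‖a‖ := norm_pos_iff.2 ha
  set g : ℝ → ℝ := fun t => ‖a‖ ^ 2 + (2 * ⟪a, c⟫) * t + ‖c‖ ^ 2 * t ^ 2 with hg
  have hgval : ∀ t : ℝ, ‖a + t • c‖ = Real.sqrt (g t) := by
    intro t
    show ‖a + t • c‖ = Real.sqrt (‖a‖ ^ 2 + (2 * ⟪a, c⟫) * t + ‖c‖ ^ 2 * t ^ 2)
    have : ‖a + t • c‖ ^ 2 = ‖a‖ ^ 2 + 2 * ⟪a, c⟫ * t + ‖c‖ ^ 2 * t ^ 2 := by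
      rw [@norm_add_sq_real]
      rw [real_inner_smul_right, norm_smul, Real.norm_eq_abs]
      rw [mul_pow, sq_abs]
      ring
    rw [← this, Real.sqrt_sq (norm_nonneg _)]
  have hgd : HasDerivAt g (2 * ⟪a, c⟫) 0 := by
    have h1 : HasDerivAt (fun t : ℝ => ‖a‖ ^ 2 + (2 * ⟪a, c⟫) * t) (2 * ⟪a, c⟫) 0 :=
      ((hasDerivAt_id 0).const_mul (2 * ⟪a, c⟫)).const_add _ |>.congr_deriv (by ring)
    have h2 : HasDerivAt (fun t : ℝ => ‖c‖ ^ 2 * t ^ 2) 0 0 := by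
      simpa using (hasDerivAt_pow 2 (0:ℝ)).const_mul (‖c‖ ^ 2)
    have h3 := h1.add h2
    rw [add_zero] at h3
    exact h3
  have hg0 : g 0 = ‖a‖ ^ 2 := by simp [hg]
  have hsq : HasDerivAt Real.sqrt (1 / (2 * ‖a‖)) (g 0) := by
    have h := Real.hasDerivAt_sqrt (x := g 0) (by rw [hg0]; positivity)
    rw [hg0, Real.sqrt_sq (norm_nonneg _)] at h
    rw [hg0]
    exact h
  have hcomp : HasDerivAt (fun t => Real.sqrt (g t)) (1 / (2 * ‖a‖) * (2 * ⟪a, c⟫)) 0 :=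
    hsq.comp 0 hgd
  have hF : HasDerivAt F (deriv F ‖a‖) ‖a‖ :=
    (hFdiff ‖a‖ (norm_nonneg a)).hasDerivAt
  have hF' : HasDerivAt F (deriv F ‖a‖) (Real.sqrt (g 0)) := by
    rw [hg0, Real.sqrt_sq (norm_nonneg _)]
    exact hF
  have hfinal : HasDerivAt (fun t => F (Real.sqrt (g t)))
      (deriv F ‖a‖ * (1 / (2 * ‖a‖) * (2 * ⟪a, c⟫))) 0 := hF'.comp 0 hcomp
  have heqfun : (fun t : ℝ => F ‖a + t • c‖) = fun t => F (Real.sqrt (g t)) := by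
    funext t; rw [hgval]
  rw [heqfun]
  convert hfinal using 1
  rw [flux, if_neg ha, real_inner_smul_left]
  field_simp

/-- The difference quotient tends to `⟪flux F a, c⟫` from the right, for any `a`. -/
lemma tendsto_Q (hFconv : ConvexOn ℝ (Ici 0) F)
    (hFdiff : ∀ t ∈ Ici (0:ℝ), DifferentiableAt ℝ F t)
    (hF0 : F 0 = 0) (hF'0 : deriv F 0 = 0)
    (a c : EuclideanSpace ℝ (Fin n)) :
    Tendsto (fun t : ℝ => (F ‖a + t • c‖ - F ‖a‖) / t) (𝓝[>] 0)
      (𝓝 ⟪flux F a, c⟫) := by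
  by_cases ha : a = 0
  · subst ha
    rw [flux, if_pos rfl]
    simp only [inner_zero_left, zero_add, norm_zero, hF0, sub_zero]
    by_cases hc : c = 0
    · subst hc
      simp only [smul_zero, norm_zero, hF0, zero_div]
      exact tendsto_const_nhds
    · have hnc : (0:ℝ) < ‖c‖ := norm_pos_iff.2 hc
      have hd : HasDerivAt F 0 0 := by
        have := (hFdiff 0 (mem_Ici.2 le_rfl)).hasDerivAt
        rwa [hF'0] at this
      have hs : Tendsto (slope F 0) (𝓝[≠] 0) (𝓝 0) :=
        hasDerivAt_iff_tendsto_slope.1 hd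
      have hmap : Tendsto (fun t : ℝ => t * ‖c‖) (𝓝[>] 0) (𝓝[≠] 0) := by
        apply tendsto_nhdsWithin_of_tendsto_nhds_of_eventually_within
        · have : Tendsto (fun t : ℝ => t * ‖c‖) (𝓝 0) (𝓝 (0 * ‖c‖)) :=
            (tendsto_id).mul_const ‖c‖
          simpa using this.mono_left nhdsWithin_le_nhds
        · filter_upwards [self_mem_nhdsWithin] with t (ht : 0 < t)
          exact ne_of_gt (by positivity)
      have hcomp : Tendsto (fun t : ℝ => slope F 0 (t * ‖c‖) * ‖c‖) (𝓝[>] 0)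
          (𝓝 (0 * ‖c‖)) := (hs.comp hmap).mul_const ‖c‖
      rw [zero_mul] at hcomp
      refine Filter.Tendsto.congr' ?_ hcomp
      filter_upwards [self_mem_nhdsWithin] with t (ht : 0 < t)
      rw [slope_def_field, hF0, sub_zero, sub_zero]
      rw [norm_smul, Real.norm_eq_abs, abs_of_pos ht]
      field_simp
  · have hd := hasDerivAt_phi hFdiff ha c
    have hs := hasDerivAt_iff_tendsto_slope.1 hd
    have : Tendsto (slope (fun t : ℝ => F ‖a + t • c‖) 0) (𝓝[>] 0)
        (𝓝 ⟪flux F a, c⟫) :=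
      hs.mono_left (nhdsWithin_mono _ fun x hx => ne_of_gt hx)
    refine this.congr ?_
    intro t
    rw [slope_def_field]
    simp

/-- Pointwise bounds on the difference quotient. -/
lemma Q_bounds (hFconv : ConvexOn ℝ (Ici 0) F)
    (hFdiff : ∀ t ∈ Ici (0:ℝ), DifferentiableAt ℝ F t)
    (hF0 : F 0 = 0) (hF'0 : deriv F 0 = 0)
    (a b : EuclideanSpace ℝ (Fin n)) {t : ℝ} (ht : t ∈ Ioc (0:ℝ) 1) :
    ⟪flux F a, b - a⟫ ≤ (F ‖a + t • (b - a)‖ - F ‖a‖) / t ∧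
      (F ‖a + t • (b - a)‖ - F ‖a‖) / t ≤ F ‖b‖ - F ‖a‖ := by
  set c := b - a
  have hconv := phi_convex hFconv (F_mono hFconv hFdiff hF0 hF'0) a c
  have hQmono : ∀ s s' : ℝ, 0 < s → 0 < s' → s ≤ s' →
      (F ‖a + s • c‖ - F ‖a‖) / s ≤ (F ‖a + s' • c‖ - F ‖a‖) / s' := by
    intro s s' hs hs' hss
    have := hconv.secant_mono (a := 0) (x := s) (y := s')
      (mem_univ _) (mem_univ _) (mem_univ _) (ne_of_gt hs) (ne_of_gt hs') hss
    simpa using this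
  constructor
  · refine le_of_tendsto (tendsto_Q hFconv hFdiff hF0 hF'0 a c) ?_
    filter_upwards [Ioo_mem_nhdsGT_of_mem (left_mem_Ico.2 ht.1)] with s hs
    exact hQmono s t hs.1 ht.1 hs.2.le
  · have := hQmono t 1 ht.1 one_pos ht.2
    simpa [c] using this

end Paux

lemma ae_diff_on {n : ℕ} {D : Set (EuclideanSpace ℝ (Fin n))} (hD : IsOpen D)
    {u : EuclideanSpace ℝ (Fin n) → ℝ}
    (hu_lip : ∀ x ∈ D, ∃ K : NNReal, ∃ s ∈ 𝓝 x, LipschitzOnWith K u s) :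
    ∀ᵐ x ∂(volume.restrict D), DifferentiableAt ℝ u x := by
  set N : Set (EuclideanSpace ℝ (Fin n)) := D ∩ {x | ¬DifferentiableAt ℝ u x} with hN
  have hN0 : volume N = 0 := by
    refine measure_null_of_locally_null N fun x hx => ?_
    obtain ⟨K, s, hs, hlip⟩ := hu_lip x hx.1
    obtain ⟨ε, hε, hball⟩ := Metric.mem_nhds_iff.1 hs
    have hlip' : LipschitzOnWith K u (Metric.ball x ε) := hlip.mono hball
    obtain ⟨g, hg, hug⟩ := hlip'.extend_real
    refine ⟨N ∩ Metric.ball x ε,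
      inter_mem_nhdsWithin N (Metric.ball_mem_nhds x hε), ?_⟩
    have hsub : N ∩ Metric.ball x ε ⊆ {y | ¬DifferentiableAt ℝ g y} := by
      rintro y ⟨hyN, hyb⟩
      intro hgy
      apply hyN.2
      have : u =ᶠ[𝓝 y] g :=
        Filter.eventuallyEq_of_mem (Metric.isOpen_ball.mem_nhds hyb) hug
      exact (Filter.EventuallyEq.differentiableAt_iff this).2 hgy
    refine measure_mono_null hsub ?_
    have := hg.ae_differentiableAt (μ := (volume : Measure (EuclideanSpace ℝ (Fin n))))
    rwa [ae_iff] at this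
  rw [ae_restrict_iff' hD.measurableSet, ae_iff]
  refine measure_mono_null ?_ hN0
  intro x hx
  simp only [mem_setOf_eq, not_forall] at hx
  exact ⟨hx.1, hx.2⟩

/-- (First-variation inequality.) Let `D ⊆ ℝⁿ` be open, `F` convex and `C¹`
on `[0,∞)` with `F(0) = F'(0) = 0`, `h = F'`, `H(t) = h(t)/t`, `V(p) = H(|p|)p` (`V(0) = 0`).
If `u, w` are locally Lipschitz on `D` with `F(|∇u|)`, `F(|∇w|)`, `|∇u| + |∇w|` integrable
on `D`, and `∫_D F(|∇u|) ≤ ∫_D F(|∇(u + t(w−u))|)` for every `t ∈ [0,1]`, then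
`∫_D ⟨V(∇u), ∇(w−u)⟩ ≥ 0`; equivalently `∫_D H(|∇u|)⟨∇u, ∇(u−w)⟩ ≤ 0`. -/
theorem statement11 {n : ℕ} (D : Set (EuclideanSpace ℝ (Fin n))) (hD : IsOpen D)
    (F : ℝ → ℝ) (hFconv : ConvexOn ℝ (Ici 0) F)
    (hFdiff : ∀ t ∈ Ici (0:ℝ), DifferentiableAt ℝ F t)
    (hF0 : F 0 = 0) (hF'0 : deriv F 0 = 0)
    (u w : EuclideanSpace ℝ (Fin n) → ℝ)
    (hu_lip : ∀ x ∈ D, ∃ K : NNReal, ∃ s ∈ 𝓝 x, LipschitzOnWith K u s)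
    (hw_lip : ∀ x ∈ D, ∃ K : NNReal, ∃ s ∈ 𝓝 x, LipschitzOnWith K w s)
    (hFu_int : IntegrableOn (fun x => F ‖gradient u x‖) D)
    (hFw_int : IntegrableOn (fun x => F ‖gradient w x‖) D)
    (hgrad_int : IntegrableOn (fun x => ‖gradient u x‖ + ‖gradient w x‖) D)
    (hmin : ∀ t ∈ Icc (0:ℝ) 1,
      ∫ x in D, F ‖gradient u x‖ ≤
        ∫ x in D, F ‖gradient (fun y => u y + t * (w y - u y)) x‖) :
    0 ≤ (∫ x in D, ⟪flux F (gradient u x), gradient w x - gradient u x⟫) ∧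
      (∫ x in D, ⟪flux F (gradient u x), gradient u x - gradient w x⟫) ≤ 0 := by
  set gu : EuclideanSpace ℝ (Fin n) → EuclideanSpace ℝ (Fin n) := gradient u with hgu
  set gw : EuclideanSpace ℝ (Fin n) → EuclideanSpace ℝ (Fin n) := gradient w with hgw
  set f : EuclideanSpace ℝ (Fin n) → ℝ := fun x => ⟪flux F (gu x), gw x - gu x⟫ with hfdef
  -- reduce the second inequality to the first
  suffices hmain : 0 ≤ ∫ x in D, f x by
    refine ⟨hmain, ?_⟩
    have hswap : (fun x => ⟪flux F (gu x), gu x - gw x⟫) = fun x => -(f x) := by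
      funext x
      rw [hfdef, ← neg_sub (gw x) (gu x), inner_neg_right]
    calc (∫ x in D, ⟪flux F (gu x), gu x - gw x⟫)
        = ∫ x in D, -(f x) := by rw [hswap]
      _ = -∫ x in D, f x := integral_neg _
      _ ≤ 0 := by linarith
  by_cases hfint : IntegrableOn f D
  swap
  · rw [integral_undef hfint]
  -- measurability of gradients
  have hmg : ∀ v : EuclideanSpace ℝ (Fin n) → ℝ, Measurable (gradient v) := by
    intro v
    exact ((InnerProductSpace.toDual ℝ
      (EuclideanSpace ℝ (Fin n))).symm.continuous.measurable).comp (measurable_fderiv ℝ v)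
  -- the continuous extension of F used for measurability
  have hFcont : ContinuousOn F (Ici 0) := fun t ht =>
    ((hFdiff t ht).continuousAt).continuousWithinAt
  set G : ℝ → ℝ := fun t => F |t| with hGdef
  have hGcont : Continuous G :=
    hFcont.comp_continuous continuous_abs fun t => abs_nonneg t
  have hGF : ∀ v : EuclideanSpace ℝ (Fin n), F ‖v‖ = G ‖v‖ := fun v => by
    rw [hGdef]; simp [abs_of_nonneg (norm_nonneg v)]
  -- the difference quotients
  set Q : ℝ → EuclideanSpace ℝ (Fin n) → ℝ :=
    fun t x => (F ‖gu x + t • (gw x - gu x)‖ - F ‖gu x‖) / t with hQdef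
  have hQmeas : ∀ t : ℝ, AEStronglyMeasurable (Q t) (volume.restrict D) := by
    intro t
    have h1 : Measurable fun x => gu x + t • (gw x - gu x) :=
      (hmg u).add (((hmg w).sub (hmg u)).const_smul t)
    have h2 : Measurable fun x => F ‖gu x + t • (gw x - gu x)‖ := by
      have : (fun x => F ‖gu x + t • (gw x - gu x)‖)
          = fun x => G ‖gu x + t • (gw x - gu x)‖ := by
        funext x; exact hGF _
      rw [this]
      exact hGcont.measurable.comp h1.norm
    have h3 : Measurable fun x => F ‖gu x‖ := by
      have : (fun x => F ‖gu x‖) = fun x => G ‖gu x‖ := by funext x; exact hGF _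
      rw [this]
      exact hGcont.measurable.comp (hmg u).norm
    exact ((h2.sub h3).div_const t).aestronglyMeasurable
  -- pointwise bounds
  have hbnd : ∀ (x : EuclideanSpace ℝ (Fin n)) {t : ℝ}, t ∈ Ioc (0:ℝ) 1 →
      f x ≤ Q t x ∧ Q t x ≤ F ‖gw x‖ - F ‖gu x‖ := by
    intro x t ht
    exact Q_bounds hFconv hFdiff hF0 hF'0 (gu x) (gw x) ht
  -- dominating function
  set bound : EuclideanSpace ℝ (Fin n) → ℝ :=
    fun x => |f x| + |F ‖gw x‖ - F ‖gu x‖| with hbdef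
  have hbound_int : Integrable bound (volume.restrict D) :=
    hfint.abs.add ((hFw_int.sub hFu_int).abs)
  have hQle : ∀ (x : EuclideanSpace ℝ (Fin n)) {t : ℝ}, t ∈ Ioc (0:ℝ) 1 →
      ‖Q t x‖ ≤ bound x := by
    intro x t ht
    obtain ⟨h1, h2⟩ := hbnd x ht
    rw [Real.norm_eq_abs, abs_le]
    simp only [hbdef]
    constructor
    · have := neg_abs_le (f x)
      have h3 := abs_nonneg (F ‖gw x‖ - F ‖gu x‖)
      linarith
    · have := le_abs_self (F ‖gw x‖ - F ‖gu x‖)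
      have h3 := abs_nonneg (f x)
      linarith
  have hQint : ∀ t : ℝ, t ∈ Ioc (0:ℝ) 1 → Integrable (Q t) (volume.restrict D) := by
    intro t ht
    exact Integrable.mono' hbound_int (hQmeas t) (Filter.Eventually.of_forall fun x => hQle x ht)
  -- a.e. differentiability, gradient of affine combination
  have hdiff : ∀ᵐ x ∂(volume.restrict D),
      DifferentiableAt ℝ u x ∧ DifferentiableAt ℝ w x :=
    (ae_diff_on hD hu_lip).and (ae_diff_on hD hw_lip)
  have hgrad_eq : ∀ t : ℝ, ∀ᵐ x ∂(volume.restrict D),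
      gradient (fun y => u y + t * (w y - u y)) x = gu x + t • (gw x - gu x) := by
    intro t
    filter_upwards [hdiff] with x hx
    obtain ⟨hux, hwx⟩ := hx
    have h1 : HasFDerivAt (fun y => u y + t * (w y - u y))
        (fderiv ℝ u x + t • (fderiv ℝ w x - fderiv ℝ u x)) x :=
      hux.hasFDerivAt.add ((hwx.hasFDerivAt.sub hux.hasFDerivAt).const_mul t)
    have h2 : HasGradientAt (fun y => u y + t * (w y - u y))
        (gu x + t • (gw x - gu x)) x := by
      rw [hasGradientAt_iff_hasFDerivAt]
      refine h1.congr_fderiv ?_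
      rw [hgu, hgw]
      simp [gradient, map_add, _root_.map_smul, map_sub,
        LinearIsometryEquiv.apply_symm_apply]
    exact h2.gradient
  -- nonnegativity of the integral of the difference quotients
  have hkey : ∀ t : ℝ, t ∈ Ioc (0:ℝ) 1 → 0 ≤ ∫ x in D, Q t x := by
    intro t ht
    have hmin' := hmin t ⟨ht.1.le, ht.2⟩
    have hcongr : (∫ x in D, F ‖gradient (fun y => u y + t * (w y - u y)) x‖)
        = ∫ x in D, F ‖gu x + t • (gw x - gu x)‖ :=
      integral_congr_ae ((hgrad_eq t).mono fun x hx => by dsimp only; rw [hx])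
    rw [hcongr] at hmin'
    have hfun : ∀ x, F ‖gu x + t • (gw x - gu x)‖ = t * Q t x + F ‖gu x‖ := by
      intro x
      rw [hQdef]
      have ht0 : t ≠ 0 := ne_of_gt ht.1
      field_simp
      ring
    have heq2 : (∫ x in D, F ‖gu x + t • (gw x - gu x)‖)
        = t * (∫ x in D, Q t x) + ∫ x in D, F ‖gu x‖ := by
      rw [show (fun x => F ‖gu x + t • (gw x - gu x)‖)
          = fun x => t * Q t x + F ‖gu x‖ from funext hfun]
      rw [integral_add (((hQint t ht).const_mul t)) hFu_int, integral_const_mul]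
    rw [heq2] at hmin'
    have htpos := ht.1
    nlinarith
  -- dominated convergence along tₖ = 1/(k+1)
  set T : ℕ → ℝ := fun k => 1 / (k + 1) with hTdef
  have hT : ∀ k : ℕ, T k ∈ Ioc (0:ℝ) 1 := by
    intro k
    constructor
    · positivity
    · rw [hTdef]
      rw [div_le_one (by positivity)]
      have : (0:ℝ) ≤ (k:ℝ) := Nat.cast_nonneg k
      linarith
  have hTlim : Tendsto T atTop (𝓝[>] (0:ℝ)) :=
    tendsto_nhdsWithin_of_tendsto_nhds_of_eventually_within _
      tendsto_one_div_add_atTop_nhds_zero_nat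
      (Filter.Eventually.of_forall fun k => (hT k).1)
  have hDCT : Tendsto (fun k => ∫ x in D, Q (T k) x) atTop (𝓝 (∫ x in D, f x)) := by
    refine tendsto_integral_of_dominated_convergence bound
      (fun k => hQmeas (T k)) hbound_int
      (fun k => Filter.Eventually.of_forall fun x => hQle x (hT k))
      (Filter.Eventually.of_forall fun x => ?_)
    exact (tendsto_Q hFconv hFdiff hF0 hF'0 (gu x) (gw x - gu x)).comp hTlim
  exact ge_of_tendsto' hDCT fun k => hkey (T k) (hT k)
end
end
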